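/- Let A be a graded-commutative DGA over ℚ, n ≥ 2, a ∈ A₁ with da = 0, r ∈ A₀, b := a − dr, ρ_k ∈ A₁ (1 ≤ k ≤ n) with dρ_k = ρ_{k−1}·a (ρ₀ := 0), and E ∈ A_{−1}. Set r' := r + dE, P_m := Σ_{k=0}^{m−1} (1/k!) ρ_{m−k}·r^k and P'_m := Σ_{k=0}^{m−1} (1/k!) ρ_{m−k}·(r')^k for 2 ≤ m ≤ n, and for m ≥ 2 define Δ_m := Σ_{s=1}^{m−1} Σ_{t=1}^{s} (1/s!) C(s,t) ρ_{m−s}·r^{s−t}·(dE)^t and Ξ_m := Σ_{s=1}^{m−1} Σ_{t=1}^{s} (1/s!) C(s,t) ρ_{m−s}·r^{s−t}·E·(dE)^{t−1}, with Δ₁ := 0 and Ξ₁ := 0 (C(s,t) denotes the binomial coefficient). Then: (i) P'_m − P_m = Δ_m for 2 ≤ m ≤ n; and (ii) dΞ_m = −Δ_m − Ξ_{m−1}·b for 2 ≤ m ≤ n. -/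

import Mathlib

noncomputable section

/-- A graded-commutative differential graded algebra over `ℚ`. -/
structure GCDGA (A : Type*) [Ring A] [Algebra ℚ A] where
  deg : ℤ → Submodule ℚ A
  decomp : DirectSum.Decomposition deg
  one_mem : (1 : A) ∈ deg 0
  mul_mem : ∀ {i j : ℤ} {x y : A}, x ∈ deg i → y ∈ deg j → x * y ∈ deg (i + j)
  d : A →ₗ[ℚ] A
  d_sq : ∀ x : A, d (d x) = 0
  d_deg : ∀ {i : ℤ} {x : A}, x ∈ deg i → d x ∈ deg (i + 1)
  leibniz : ∀ {i : ℤ} (x y : A), x ∈ deg i →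
    d (x * y) = d x * y + ((-1 : ℚ) ^ i) • (x * d y)
  gcomm : ∀ {i j : ℤ} (x y : A), x ∈ deg i → y ∈ deg j →
    x * y = ((-1 : ℚ) ^ (i * j)) • (y * x)

/-- `P_m := ∑_{k=0}^{m−1} (1/k!) ρ_{m−k} · r^k`. -/
def Pm {A : Type*} [Ring A] [Algebra ℚ A] (ρ : ℕ → A) (r : A) (m : ℕ) : A :=
  ∑ k ∈ Finset.range m, ((k.factorial : ℚ))⁻¹ • (ρ (m - k) * r ^ k)

/-- `Δ_m := ∑_{s=1}^{m−1} ∑_{t=1}^{s} (1/s!) C(s,t) ρ_{m−s}·r^{s−t}·(dE)^t`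
(so `Δ₁ = 0`).  Here `dE` is passed as the element `de`. -/
def DeltaM {A : Type*} [Ring A] [Algebra ℚ A] (ρ : ℕ → A) (r de : A) (m : ℕ) : A :=
  ∑ s ∈ Finset.Icc 1 (m - 1), ∑ t ∈ Finset.Icc 1 s,
    (((s.factorial : ℚ))⁻¹ * (s.choose t : ℚ)) • (ρ (m - s) * r ^ (s - t) * de ^ t)

/-- `Ξ_m := ∑_{s=1}^{m−1} ∑_{t=1}^{s} (1/s!) C(s,t) ρ_{m−s}·r^{s−t}·E·(dE)^{t−1}`
(so `Ξ₁ = 0`). -/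
def XiM {A : Type*} [Ring A] [Algebra ℚ A] (ρ : ℕ → A) (r E de : A) (m : ℕ) : A :=
  ∑ s ∈ Finset.Icc 1 (m - 1), ∑ t ∈ Finset.Icc 1 s,
    (((s.factorial : ℚ))⁻¹ * (s.choose t : ℚ)) • (ρ (m - s) * r ^ (s - t) * E * de ^ (t - 1))

namespace Aux
variable {A : Type*} [Ring A] [Algebra ℚ A] (G : GCDGA A)

lemma comm0 {x y : A} {j : ℤ} (hx : x ∈ G.deg 0) (hy : y ∈ G.deg j) :
    x * y = y * x := by
  have h := G.gcomm x y hx hy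
  simpa using h

lemma anticomm_neg1 {x y : A} (hx : x ∈ G.deg (-1)) (hy : y ∈ G.deg 1) :
    x * y = -(y * x) := by
  have h := G.gcomm x y hx hy
  norm_num at h
  simpa using h

lemma pow_mem0 {x : A} (hx : x ∈ G.deg 0) : ∀ k : ℕ, x ^ k ∈ G.deg 0
  | 0 => by simpa using G.one_mem
  | (k+1) => by
      have := G.mul_mem (pow_mem0 hx k) hx
      rw [← pow_succ] at this
      simpa using this

lemma leib0 {x : A} (hx : x ∈ G.deg 0) (y : A) :
    G.d (x * y) = G.d x * y + x * G.d y := by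
  have h := G.leibniz x y hx
  simpa using h

lemma leib1 {x : A} (hx : x ∈ G.deg 1) (y : A) :
    G.d (x * y) = G.d x * y - x * G.d y := by
  have h := G.leibniz x y hx
  norm_num at h
  simpa [sub_eq_add_neg] using h

lemma leib_neg1 {x : A} (hx : x ∈ G.deg (-1)) (y : A) :
    G.d (x * y) = G.d x * y - x * G.d y := by
  have h := G.leibniz x y hx
  norm_num at h
  simpa [sub_eq_add_neg] using h

lemma d_one : G.d 1 = 0 := by
  have h := leib0 G G.one_mem 1
  simp at h
  exact h

lemma d_pow0 {x : A} (hx : x ∈ G.deg 0) :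
    ∀ k : ℕ, G.d (x ^ (k+1)) = ((k+1 : ℕ) : ℚ) • (x ^ k * G.d x)
  | 0 => by simp
  | (k+1) => by
      have hdx : G.d x ∈ G.deg 1 := by simpa using G.d_deg hx
      have hc : x ^ (k+1) * G.d x = G.d x * x ^ (k+1) :=
        comm0 G (pow_mem0 G hx (k+1)) hdx
      rw [pow_succ' x (k+1), leib0 G hx, d_pow0 hx k]
      rw [mul_smul_comm, ← mul_assoc, ← pow_succ']
      rw [← hc]
      have : ((k+1+1 : ℕ) : ℚ) = ((k+1 : ℕ) : ℚ) + 1 := by push_cast; ring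
      rw [this, add_smul, one_smul]
      abel

lemma d_pow0' {x : A} (hx : x ∈ G.deg 0) (k : ℕ) :
    G.d (x ^ k) = (k : ℚ) • (x ^ (k-1) * G.d x) := by
  cases k with
  | zero => simp [d_one G]
  | succ k => simpa using d_pow0 G hx k

lemma Icc_sum {M : Type*} [AddCommMonoid M] (N : ℕ) (f : ℕ → M) :
    ∑ s ∈ Finset.Icc 1 N, f s = ∑ i ∈ Finset.range N, f (i+1) := by
  rw [← Finset.Ico_add_one_right_eq_Icc, Finset.sum_Ico_eq_sum_range]
  simp [add_comm]

lemma natCast_mul_eq_smul (c : ℕ) (x : A) : x * (c : A) = (c : ℚ) • x := by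
  rw [show ((c:A)) = algebraMap ℚ A (c:ℚ) by simp, ← Algebra.commutes, ← Algebra.smul_def]

variable {r E : A}

lemma de_mem0 (hE : E ∈ G.deg (-1)) : G.d E ∈ G.deg 0 := by
  have := G.d_deg hE; norm_num at this; exact this

lemma d_block (hr : r ∈ G.deg 0) (hE : E ∈ G.deg (-1)) {x : A} (hx : x ∈ G.deg 1) (p q : ℕ) :
    G.d (x * (r ^ p * (E * (G.d E) ^ q)))
      = G.d x * (r ^ p * (E * (G.d E) ^ q))
        - (p : ℚ) • (x * (r ^ (p-1) * (G.d r * (E * (G.d E) ^ q))))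
        - x * (r ^ p * (G.d E) ^ (q+1)) := by
  have hde0 : G.d E ∈ G.deg 0 := de_mem0 G hE
  have hdeq : G.d ((G.d E) ^ q) = 0 := by
    rw [d_pow0' G hde0]
    simp [G.d_sq]
  have hdw : G.d (E * (G.d E) ^ q) = (G.d E) ^ (q+1) := by
    rw [leib_neg1 G hE, hdeq, pow_succ']
    simp
  have hdu : G.d (r ^ p * (E * (G.d E) ^ q))
      = (p:ℚ) • (r ^ (p-1) * (G.d r * (E * (G.d E) ^ q))) + r ^ p * (G.d E) ^ (q+1) := by
    rw [leib0 G (pow_mem0 G hr p), hdw, d_pow0' G hr]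
    rw [smul_mul_assoc, mul_assoc]
  rw [leib1 G hx, hdu, mul_add, mul_smul_comm]
  abel

lemma block_mem_neg1 (hr : r ∈ G.deg 0) (hE : E ∈ G.deg (-1)) (p q : ℕ) :
    r ^ p * (E * (G.d E) ^ q) ∈ G.deg (-1) := by
  have h1 : E * (G.d E) ^ q ∈ G.deg (-1) := by
    have := G.mul_mem hE (pow_mem0 G (de_mem0 G hE) q)
    norm_num at this; exact this
  have := G.mul_mem (pow_mem0 G hr p) h1
  norm_num at this; exact this

lemma move_deg1 (hr : r ∈ G.deg 0) (hE : E ∈ G.deg (-1)) {x : A} (hx : x ∈ G.deg 1) (p q : ℕ) :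
    (r ^ p * (E * (G.d E) ^ q)) * x = -(x * (r ^ p * (E * (G.d E) ^ q))) :=
  anticomm_neg1 G (block_mem_neg1 G hr hE p q) hx

lemma eblock_mem (hE : E ∈ G.deg (-1)) (q : ℕ) :
    E * (G.d E) ^ q ∈ G.deg (-1) := by
  have := G.mul_mem hE (pow_mem0 G (de_mem0 G hE) q)
  norm_num at this; exact this

lemma move_full (hr : r ∈ G.deg 0) (hE : E ∈ G.deg (-1))
    {x : A} (hx : x ∈ G.deg 1) (y : A) (p q : ℕ) :
    y * r ^ p * E * (G.d E) ^ q * x = -(y * x * (r ^ p * (E * (G.d E) ^ q))) := by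
  have h := move_deg1 G hr hE hx p q
  calc y * r ^ p * E * (G.d E) ^ q * x
      = y * ((r ^ p * (E * (G.d E) ^ q)) * x) := by simp only [mul_assoc]
    _ = y * (-(x * (r ^ p * (E * (G.d E) ^ q)))) := by rw [h]
    _ = -(y * x * (r ^ p * (E * (G.d E) ^ q))) := by simp only [mul_neg, mul_assoc]

lemma move_dr (hr : r ∈ G.deg 0) (hE : E ∈ G.deg (-1)) (y : A) (p q : ℕ) :
    y * r ^ p * E * (G.d E) ^ q * G.d r
      = -(y * (r ^ p * (G.d r * (E * (G.d E) ^ q)))) := by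
  have hdr1 : G.d r ∈ G.deg 1 := by simpa using G.d_deg hr
  have h : (E * (G.d E) ^ q) * G.d r = -(G.d r * (E * (G.d E) ^ q)) :=
    anticomm_neg1 G (eblock_mem G hE q) hdr1
  calc y * r ^ p * E * (G.d E) ^ q * G.d r
      = y * (r ^ p * ((E * (G.d E) ^ q) * G.d r)) := by simp only [mul_assoc]
    _ = y * (r ^ p * (-(G.d r * (E * (G.d E) ^ q)))) := by rw [h]
    _ = -(y * (r ^ p * (G.d r * (E * (G.d E) ^ q)))) := by simp only [mul_neg]

lemma coeff_id (i j : ℕ) (hj : j ≤ i) :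
    (((i+2).factorial : ℚ))⁻¹ * ((i+2).choose (j+1) : ℚ) * ((i+1-j : ℕ) : ℚ)
      = (((i+1).factorial : ℚ))⁻¹ * ((i+1).choose (j+1) : ℚ) := by
  obtain ⟨k, rfl⟩ : ∃ k, i = j + k := ⟨i - j, by omega⟩
  rw [Nat.cast_choose ℚ (show j+1 ≤ j+k+2 by omega),
      Nat.cast_choose ℚ (show j+1 ≤ j+k+1 by omega)]
  rw [show j+k+2-(j+1) = k+1 by omega, show j+k+1-(j+1) = k by omega,
      show j+k+1-j = k+1 by omega]
  have h2 : ((j+1).factorial : ℚ) ≠ 0 := by exact_mod_cast (j+1).factorial_ne_zero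
  have h3 : ((k).factorial : ℚ) ≠ 0 := by exact_mod_cast (k).factorial_ne_zero
  have h4 : ((j+k+1).factorial : ℚ) ≠ 0 := by exact_mod_cast (j+k+1).factorial_ne_zero
  have h6 : ((j+k+2).factorial : ℚ) = ((j+k:ℚ)+2) * ((j+k+1).factorial : ℚ) := by
    rw [show j+k+2 = (j+k+1)+1 from rfl, Nat.factorial_succ]; push_cast; ring
  have h7 : ((k+1).factorial : ℚ) = ((k:ℚ)+1) * ((k).factorial : ℚ) := by
    rw [Nat.factorial_succ]; push_cast; ring
  rw [h6, h7]
  have h5 : ((k:ℚ)+1) ≠ 0 := by positivity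
  have h8 : ((j+k:ℚ)+2) ≠ 0 := by positivity
  field_simp
  push_cast
  ring

lemma XiM_range (ρ : ℕ → A) (r E de : A) (N : ℕ) :
    XiM ρ r E de (N+1) = ∑ i ∈ Finset.range N, ∑ j ∈ Finset.range (i+1),
      ((((i+1).factorial : ℚ))⁻¹ * (((i+1).choose (j+1) : ℕ) : ℚ)) •
        (ρ (N-i) * r ^ (i-j) * E * de ^ j) := by
  rw [XiM, show N+1-1 = N from rfl, Icc_sum]
  apply Finset.sum_congr rfl
  intro i _
  rw [Icc_sum]
  apply Finset.sum_congr rfl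
  intro j _
  simp [Nat.succ_sub_succ]

lemma DeltaM_range (ρ : ℕ → A) (r de : A) (N : ℕ) :
    DeltaM ρ r de (N+1) = ∑ i ∈ Finset.range N, ∑ j ∈ Finset.range (i+1),
      ((((i+1).factorial : ℚ))⁻¹ * (((i+1).choose (j+1) : ℕ) : ℚ)) •
        (ρ (N-i) * r ^ (i-j) * de ^ (j+1)) := by
  rw [DeltaM, show N+1-1 = N from rfl, Icc_sum]
  apply Finset.sum_congr rfl
  intro i _
  rw [Icc_sum]
  apply Finset.sum_congr rfl
  intro j _
  simp [Nat.succ_sub_succ]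

lemma part1 {r de : A} (hrde : Commute r de) (ρ : ℕ → A) (m : ℕ) (hm2 : 2 ≤ m) :
    Pm ρ (r + de) m - Pm ρ r m = DeltaM ρ r de m := by
  obtain ⟨M, rfl⟩ : ∃ M, m = M + 2 := ⟨m - 2, by omega⟩
  rw [Pm, Pm, DeltaM, ← Finset.sum_sub_distrib]
  simp only [← smul_sub, ← mul_sub]
  rw [show M+2 = (M+1)+1 from rfl, Finset.sum_range_succ']
  simp only [pow_zero, sub_self, mul_zero, smul_zero, add_zero]
  rw [show M+2-1 = M+1 from rfl, Icc_sum]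
  apply Finset.sum_congr rfl
  intro i hi
  rw [Icc_sum]
  have hbin := hrde.add_pow (i+1)
  rw [Finset.sum_range_succ] at hbin
  simp only [Nat.sub_self, pow_zero, mul_one, Nat.choose_self, Nat.cast_one] at hbin
  have hdiff : (r + de) ^ (i+1) - r ^ (i+1)
      = ∑ t ∈ Finset.range (i+1), r ^ t * de ^ (i+1-t) * ((i+1).choose t : A) := by
    rw [hbin]; abel
  rw [hdiff, ← Finset.sum_range_reflect, Finset.mul_sum, Finset.smul_sum]
  apply Finset.sum_congr rfl
  intro j hj
  have hj' : j ≤ i := by simpa [Nat.lt_succ_iff] using hj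
  have e1 : i + 1 - 1 - j = i - j := by omega
  have e2 : i + 1 - (i - j) = j + 1 := by omega
  have e3 : (i+1).choose (i - j) = (i+1).choose (j+1) := by
    have := Nat.choose_symm (show j+1 ≤ i+1 by omega)
    simpa [show i+1-(j+1) = i - j by omega] using this
  rw [e1, e2, e3, natCast_mul_eq_smul, mul_smul_comm, smul_smul]
  have e4 : M + 2 - (i+1) = M + 1 - i := by omega
  have e5 : i + 1 - (j + 1) = i - j := by omega
  rw [e4, e5, mul_assoc]

lemma part2 (n : ℕ) {a : A} (ha : a ∈ G.deg 1)
    (hr : r ∈ G.deg 0) (ρ : ℕ → A) (hρ0 : ρ 0 = 0)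
    (hρ : ∀ k, 1 ≤ k → k ≤ n → ρ k ∈ G.deg 1)
    (hdρ : ∀ k, 1 ≤ k → k ≤ n → G.d (ρ k) = ρ (k-1) * a)
    (hE : E ∈ G.deg (-1))
    (m : ℕ) (hm2 : 2 ≤ m) (hmn : m ≤ n) :
    G.d (XiM ρ r E (G.d E) m)
      = -DeltaM ρ r (G.d E) m - XiM ρ r E (G.d E) (m-1) * (a - G.d r) := by
  obtain ⟨M, rfl⟩ : ∃ M, m = M + 2 := ⟨m - 2, by omega⟩
  have hXd : G.d (XiM ρ r E (G.d E) (M+2))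
      = (∑ i ∈ Finset.range (M+1), ∑ j ∈ Finset.range (i+1),
          ((((i+1).factorial : ℚ))⁻¹ * (((i+1).choose (j+1) : ℕ) : ℚ)) •
            (ρ (M-i) * a * (r ^ (i-j) * (E * (G.d E) ^ j))))
      - (∑ i ∈ Finset.range (M+1), ∑ j ∈ Finset.range (i+1),
          (((((i+1).factorial : ℚ))⁻¹ * (((i+1).choose (j+1) : ℕ) : ℚ)) * ((i-j : ℕ) : ℚ)) •
            (ρ (M+1-i) * (r ^ (i-j-1) * (G.d r * (E * (G.d E) ^ j)))))
      - (∑ i ∈ Finset.range (M+1), ∑ j ∈ Finset.range (i+1),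
          ((((i+1).factorial : ℚ))⁻¹ * (((i+1).choose (j+1) : ℕ) : ℚ)) •
            (ρ (M+1-i) * (r ^ (i-j) * (G.d E) ^ (j+1)))) := by
    rw [show M+2 = (M+1)+1 by omega, XiM_range, map_sum]
    rw [← Finset.sum_sub_distrib, ← Finset.sum_sub_distrib]
    apply Finset.sum_congr rfl
    intro i hi
    rw [map_sum, ← Finset.sum_sub_distrib, ← Finset.sum_sub_distrib]
    apply Finset.sum_congr rfl
    intro j hj
    rw [map_smul]
    rw [show ρ (M+1-i) * r^(i-j) * E * (G.d E)^j
        = ρ (M+1-i) * (r^(i-j) * (E * (G.d E)^j)) by simp only [mul_assoc]]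
    have h1 : 1 ≤ M+1-i := by have := Finset.mem_range.mp hi; omega
    have h2 : M+1-i ≤ n := by have := Finset.mem_range.mp hi; omega
    rw [d_block G hr hE (hρ _ h1 h2), hdρ _ h1 h2, show M+1-i-1 = M-i by omega]
    rw [smul_sub, smul_sub, smul_smul]
  have hS1 : (∑ i ∈ Finset.range (M+1), ∑ j ∈ Finset.range (i+1),
          ((((i+1).factorial : ℚ))⁻¹ * (((i+1).choose (j+1) : ℕ) : ℚ)) •
            (ρ (M-i) * a * (r ^ (i-j) * (E * (G.d E) ^ j))))
      = -(XiM ρ r E (G.d E) (M+1) * a) := by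
    rw [Finset.sum_range_succ]
    have hlast : (∑ j ∈ Finset.range (M+1),
        ((((M+1).factorial : ℚ))⁻¹ * (((M+1).choose (j+1) : ℕ) : ℚ)) •
          (ρ (M-M) * a * (r ^ (M-j) * (E * (G.d E) ^ j)))) = 0 := by
      simp [hρ0]
    rw [hlast, add_zero, XiM_range, Finset.sum_mul, ← Finset.sum_neg_distrib]
    apply Finset.sum_congr rfl
    intro i hi
    rw [Finset.sum_mul, ← Finset.sum_neg_distrib]
    apply Finset.sum_congr rfl
    intro j hj
    rw [smul_mul_assoc, move_full G hr hE ha (ρ (M-i)) (i-j) j, smul_neg, neg_neg]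
  have hS2 : (∑ i ∈ Finset.range (M+1), ∑ j ∈ Finset.range (i+1),
          (((((i+1).factorial : ℚ))⁻¹ * (((i+1).choose (j+1) : ℕ) : ℚ)) * ((i-j : ℕ) : ℚ)) •
            (ρ (M+1-i) * (r ^ (i-j-1) * (G.d r * (E * (G.d E) ^ j)))))
      = -(XiM ρ r E (G.d E) (M+1) * G.d r) := by
    rw [Finset.sum_range_succ']
    have h0 : (∑ j ∈ Finset.range (0+1),
        (((((0+1).factorial : ℚ))⁻¹ * ((((0+1)).choose (j+1) : ℕ) : ℚ)) * ((0-j : ℕ) : ℚ)) •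
          (ρ (M+1-0) * (r ^ (0-j-1) * (G.d r * (E * (G.d E) ^ j))))) = 0 := by
      simp
    rw [h0, add_zero, XiM_range, Finset.sum_mul, ← Finset.sum_neg_distrib]
    apply Finset.sum_congr rfl
    intro i hi
    rw [Finset.sum_range_succ]
    have hlast : ((((((i+1)+1).factorial : ℚ))⁻¹ * ((((i+1)+1).choose ((i+1)+1) : ℕ) : ℚ))
          * (((i+1)-(i+1) : ℕ) : ℚ)) •
        (ρ (M+1-(i+1)) * (r ^ ((i+1)-(i+1)-1) * (G.d r * (E * (G.d E) ^ (i+1))))) = 0 := by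
      simp
    rw [hlast, add_zero, Finset.sum_mul, ← Finset.sum_neg_distrib]
    apply Finset.sum_congr rfl
    intro j hj
    have hj' : j ≤ i := Nat.lt_succ_iff.mp (Finset.mem_range.mp hj)
    rw [smul_mul_assoc, move_dr G hr hE (ρ (M-i)) (i-j) j, smul_neg, neg_neg]
    rw [show M+1-(i+1) = M-i by omega, show (i+1)-j-1 = i-j by omega,
        show (i+1)+1 = i+2 by omega]
    rw [coeff_id i j hj']
  have hS3 : (∑ i ∈ Finset.range (M+1), ∑ j ∈ Finset.range (i+1),
          ((((i+1).factorial : ℚ))⁻¹ * (((i+1).choose (j+1) : ℕ) : ℚ)) •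
            (ρ (M+1-i) * (r ^ (i-j) * (G.d E) ^ (j+1))))
      = DeltaM ρ r (G.d E) (M+2) := by
    rw [show M+2 = (M+1)+1 by omega, DeltaM_range]
    apply Finset.sum_congr rfl
    intro i _
    apply Finset.sum_congr rfl
    intro j _
    simp only [mul_assoc]
  rw [hXd, hS1, hS2, hS3, show M+2-1 = M+1 by omega, mul_sub]
  abel

end Aux

/-- with `r' := r + dE`, one has
(i) `P'_m − P_m = Δ_m` and (ii) `dΞ_m = −Δ_m − Ξ_{m−1}·b`, for all `2 ≤ m ≤ n`. -/
theorem modify_r_identities {A : Type*} [Ring A] [Algebra ℚ A] (G : GCDGA A)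
    (n : ℕ) (hn : 2 ≤ n)
    (a : A) (ha : a ∈ G.deg 1) (hda : G.d a = 0)
    (r : A) (hr : r ∈ G.deg 0)
    (ρ : ℕ → A) (hρ0 : ρ 0 = 0)
    (hρ : ∀ k, 1 ≤ k → k ≤ n → ρ k ∈ G.deg 1)
    (hdρ : ∀ k, 1 ≤ k → k ≤ n → G.d (ρ k) = ρ (k - 1) * a)
    (E : A) (hE : E ∈ G.deg (-1))
    (b : A) (hb : b = a - G.d r)
    (r' : A) (hr' : r' = r + G.d E) :
    (∀ m, 2 ≤ m → m ≤ n →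
      Pm ρ r' m - Pm ρ r m = DeltaM ρ r (G.d E) m) ∧
    (∀ m, 2 ≤ m → m ≤ n →
      G.d (XiM ρ r E (G.d E) m) =
        -DeltaM ρ r (G.d E) m - XiM ρ r E (G.d E) (m - 1) * b) := by
  subst hb hr'
  constructor
  · intro m hm2 _
    exact Aux.part1 (Aux.comm0 G hr (Aux.de_mem0 G hE)) ρ m hm2
  · intro m hm2 hmn
    exact Aux.part2 G n ha hr ρ hρ0 hρ hdρ hE m hm2 hmn

end
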